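/- Let G9 be the interlacement graph of the matching L9 = { {0,5}, {1,8}, {2,9}, {3,14}, {4,15}, {6,13}, {7,12}, {10,17}, {11,16} } of {0,...,17}, with vertex set {0,...,8} where vertex i corresponds to the i-th chord in the listed order and vertices i, j are adjacent if and only if the corresponding chords are interlaced. Then there is no subset A of the vertices of G9 such that for all distinct vertices u and v the following are equivalent: (i) u and v have an odd number of common neighbours; (ii) u and v are adjacent and either both u and v are in A or neither is in A. That is, G9 fails Rosenstiehl's second condition. -/

import Mathlib

/-- Two sorted pairs (chords) are interlaced. -/
def Interlaced (p q : ℕ × ℕ) : Prop :=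
  (p.1 < q.1 ∧ q.1 < p.2 ∧ p.2 < q.2) ∨ (q.1 < p.1 ∧ p.1 < q.2 ∧ q.2 < p.2)

/-- Interlacement graph of a tuple of chords: vertex `i` corresponds to the `i`-th chord,
and two vertices are adjacent iff the corresponding chords are interlaced. -/
def interGraph {n : ℕ} (c : Fin n → ℕ × ℕ) : SimpleGraph (Fin n) where
  Adj i j := i ≠ j ∧ Interlaced (c i) (c j)
  symm := ⟨fun _ _ h => ⟨h.1.symm, Or.symm h.2⟩⟩
  loopless := ⟨fun _ h => h.1 rfl⟩

/-- The chords of the matching `L9 = {{0,5},{1,8},{2,9},{3,14},{4,15},{6,13},{7,12},{10,17},{11,16}}`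
of `{0, ..., 17}`, in the listed order. -/
def L9chords : Fin 9 → ℕ × ℕ :=
  ![(0, 5), (1, 8), (2, 9), (3, 14), (4, 15), (6, 13), (7, 12), (10, 17), (11, 16)]

/-- The interlacement graph of the matching `L9`. -/
def G9 : SimpleGraph (Fin 9) := interGraph L9chords


instance : ∀ p q, Decidable (Interlaced p q) := fun p q => by
  unfold Interlaced; infer_instance

instance : DecidableRel G9.Adj := fun i j =>
  decidable_of_iff (i ≠ j ∧ Interlaced (L9chords i) (L9chords j)) Iff.rfl

lemma cn15 : {w | G9.Adj 1 w ∧ G9.Adj 5 w} = ↑({2} : Finset (Fin 9)) :=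
  Set.ext (by decide)

lemma cn14 : {w | G9.Adj 1 w ∧ G9.Adj 4 w} = ↑({0, 2, 3} : Finset (Fin 9)) :=
  Set.ext (by decide)

lemma cn47 : {w | G9.Adj 4 w ∧ G9.Adj 7 w} = ↑({3} : Finset (Fin 9)) :=
  Set.ext (by decide)

lemma cn57 : {w | G9.Adj 5 w ∧ G9.Adj 7 w} = ↑(∅ : Finset (Fin 9)) :=
  Set.ext (by decide)

/-- The interlacement graph `G9` of the matching `L9` fails Rosenstiehl's second
condition: there is no subset `A` of the vertices such that for all distinct vertices
`u`, `v`: `u` and `v` have an odd number of common neighbours iff `u` and `v` are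
adjacent and either both lie in `A` or neither does. -/
theorem G9_not_rosenstiehl :
    ¬ ∃ A : Set (Fin 9), ∀ u v : Fin 9, u ≠ v →
      (Odd {w | G9.Adj u w ∧ G9.Adj v w}.ncard ↔
        (G9.Adj u v ∧ ((u ∈ A ∧ v ∈ A) ∨ (u ∉ A ∧ v ∉ A)))) := by
  rintro ⟨A, h⟩
  have h15 := (h 1 5 (by decide)).mp (by rw [cn15, Set.ncard_coe_finset]; decide)
  have h14 := (h 1 4 (by decide)).mp (by rw [cn14, Set.ncard_coe_finset]; decide)
  have h47 := (h 4 7 (by decide)).mp (by rw [cn47, Set.ncard_coe_finset]; decide)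
  have h57 := (h 5 7 (by decide)).not.mp (by rw [cn57, Set.ncard_coe_finset]; decide)
  have hadj : G9.Adj 5 7 := by decide
  have := h15.2; have := h14.2; have := h47.2
  tauto
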